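/- The size of the set of k-th powers is eventually smaller than the size of the set of primes, for every k ≥ 2: for every k ≥ 2 there exists m such that for all n > m, ((Finset.Icc 1 n).filter (fun j => ∃ i, i ^ k = j)).card < Nat.primeCounting n. -/

import Mathlib

/-- helper: `2*j + 6 ≤ 2^j` for `j ≥ 5`. -/
lemma aux_two_mul_add_six_le_two_pow : ∀ j, 5 ≤ j → 2 * j + 6 ≤ 2 ^ j := by
  have key : ∀ i, 2 * (i + 5) + 6 ≤ 2 ^ (i + 5) := by
    intro i
    induction i with
    | zero => norm_num
    | succ i ih =>
      calc 2 * (i + 1 + 5) + 6 ≤ 2 * (2 * (i + 5) + 6) := by omega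
        _ ≤ 2 * 2 ^ (i + 5) := by omega
        _ = 2 ^ (i + 1 + 5) := by ring
  intro j hj
  have := key (j - 5)
  have hj5 : j - 5 + 5 = j := by omega
  rwa [hj5] at this

/-- helper: `4 * (log₂ m + 1) ≤ √m` for `m ≥ 2^14`. -/
lemma aux_log_le_sqrt {m : ℕ} (hm : 2 ^ 14 ≤ m) :
    4 * (Nat.log 2 m + 1) ≤ Nat.sqrt m := by
  have hm0 : m ≠ 0 := by positivity
  set L := Nat.log 2 m with hL
  have hL14 : 14 ≤ L := by
    rw [hL, Nat.le_log_iff_pow_le (by norm_num) hm0]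
    exact hm
  have hj : 5 ≤ L / 2 - 2 := by omega
  have h1 : L + 1 ≤ 2 * (L / 2 - 2) + 6 := by omega
  have h2 : 2 * (L / 2 - 2) + 6 ≤ 2 ^ (L / 2 - 2) :=
    aux_two_mul_add_six_le_two_pow _ hj
  have h3 : 4 * (L + 1) ≤ 2 ^ (L / 2) := by
    calc 4 * (L + 1) ≤ 4 * 2 ^ (L / 2 - 2) := by
          have := h1.trans h2; omega
      _ = 2 ^ (L / 2 - 2 + 2) := by rw [pow_add]; ring
      _ = 2 ^ (L / 2) := by congr 1; omega
  refine h3.trans (Nat.le_sqrt.mpr ?_)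
  calc 2 ^ (L / 2) * 2 ^ (L / 2) = 2 ^ (L / 2 + L / 2) := by rw [pow_add]
    _ ≤ 2 ^ L := Nat.pow_le_pow_right (by norm_num) (by omega)
    _ ≤ m := Nat.pow_log_le_self 2 hm0

/-- helper: `m^(√m + 2) ≤ 2^m` for `m ≥ 2^14`. -/
lemma aux_pow_sqrt_le {m : ℕ} (hm : 2 ^ 14 ≤ m) :
    m ^ (Nat.sqrt m + 2) ≤ 2 ^ m := by
  have hm0 : m ≠ 0 := by positivity
  set L := Nat.log 2 m with hL
  set s := Nat.sqrt m with hs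
  have hs2 : 2 ≤ s := by
    rw [hs, show (2:ℕ) = Nat.sqrt 4 by norm_num]
    exact Nat.sqrt_le_sqrt (by omega)
  have hss : s * s ≤ m := by
    have := Nat.sqrt_le' m
    rwa [pow_two] at this
  have hlog : 4 * (L + 1) ≤ s := aux_log_le_sqrt hm
  have key : (L + 1) * (s + 2) ≤ m := by
    have : 4 * ((L + 1) * (s + 2)) ≤ 4 * m := by
      calc 4 * ((L + 1) * (s + 2)) = (4 * (L + 1)) * (s + 2) := by ring
        _ ≤ s * (s + 2) := Nat.mul_le_mul_right _ hlog
        _ ≤ 2 * (s * s) := by nlinarith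
        _ ≤ 4 * m := by omega
    omega
  calc m ^ (s + 2) ≤ (2 ^ (L + 1)) ^ (s + 2) :=
        Nat.pow_le_pow_left (Nat.lt_pow_succ_log_self (by norm_num) m).le _
    _ = 2 ^ ((L + 1) * (s + 2)) := by rw [← pow_mul]
    _ ≤ 2 ^ m := Nat.pow_le_pow_right (by norm_num) key

/-- helper: central binomial coefficient bounded by `(2n)^π(2n)`. -/
lemma aux_centralBinom_le {n : ℕ} (hn : 1 ≤ n) :
    Nat.centralBinom n ≤ (2 * n) ^ Nat.primeCounting (2 * n) := by
  have h2n : 0 < 2 * n := by omega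
  have hC : Nat.centralBinom n ≠ 0 := Nat.centralBinom_ne_zero n
  set C := Nat.centralBinom n with hCdef
  have hsub : C.primeFactors ⊆ (2 * n + 1).primesBelow := by
    intro p hp
    have hpp : p.Prime := Nat.prime_of_mem_primeFactors hp
    have hdvd : p ∣ C := Nat.dvd_of_mem_primeFactors hp
    have hν : 1 ≤ C.factorization p :=
      (Nat.Prime.factorization_pos_of_dvd hpp hC hdvd)
    have hple : p ≤ 2 * n := by
      have := Nat.pow_factorization_choose_le (p := p) (n := 2 * n) (k := n) h2n
      rw [← Nat.centralBinom_eq_two_mul_choose, ← hCdef] at this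
      calc p = p ^ 1 := (pow_one p).symm
        _ ≤ p ^ C.factorization p := Nat.pow_le_pow_right hpp.one_lt.le hν
        _ ≤ 2 * n := this
    exact Nat.mem_primesBelow.mpr ⟨by omega, hpp⟩
  have hcard : C.primeFactors.card ≤ Nat.primeCounting (2 * n) := by
    have := Finset.card_le_card hsub
    rwa [Nat.primesBelow_card_eq_primeCounting',
      show 2 * n + 1 = (2 * n) + 1 from rfl, ← Nat.primeCounting] at this
  calc C = C.factorization.prod (· ^ ·) :=
        (Nat.factorization_prod_pow_eq_self hC).symm
    _ = ∏ p ∈ C.primeFactors, p ^ C.factorization p := by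
        rw [Finsupp.prod, Nat.support_factorization]
    _ ≤ ∏ _p ∈ C.primeFactors, (2 * n) := by
        apply Finset.prod_le_prod
        · intros; positivity
        · intro p hp
          have := Nat.pow_factorization_choose_le (p := p) (n := 2 * n) (k := n) h2n
          rwa [← Nat.centralBinom_eq_two_mul_choose, ← hCdef] at this
    _ = (2 * n) ^ C.primeFactors.card := Finset.prod_const _
    _ ≤ (2 * n) ^ Nat.primeCounting (2 * n) :=
        Nat.pow_le_pow_right h2n hcard

/-- helper: `π(2n) ≥ √(2n) + 2` for `n ≥ 2^14`. -/
lemma aux_sqrt_add_two_le_primeCounting {n : ℕ} (hn : 2 ^ 14 ≤ n) :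
    Nat.sqrt (2 * n) + 2 ≤ Nat.primeCounting (2 * n) := by
  by_contra h
  push_neg at h
  have hpi : Nat.primeCounting (2 * n) + 1 ≤ Nat.sqrt (2 * n) + 2 := by omega
  have h2n : 2 ^ 14 ≤ 2 * n := by omega
  have h4 : (4:ℕ) ≤ n := by omega
  have hchain : 4 ^ n < 4 ^ n := by
    calc 4 ^ n < n * Nat.centralBinom n := Nat.four_pow_lt_mul_centralBinom n h4
      _ ≤ (2 * n) * (2 * n) ^ Nat.primeCounting (2 * n) :=
          Nat.mul_le_mul (by omega) (aux_centralBinom_le (by omega))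
      _ = (2 * n) ^ (Nat.primeCounting (2 * n) + 1) := by
          rw [pow_succ]; ring
      _ ≤ (2 * n) ^ (Nat.sqrt (2 * n) + 2) :=
          Nat.pow_le_pow_right (by omega) hpi
      _ ≤ 2 ^ (2 * n) := aux_pow_sqrt_le h2n
      _ = 4 ^ n := by rw [pow_mul]; norm_num
  exact absurd hchain (lt_irrefl _)

open scoped Classical in
/-- helper: the number of `k`-th powers in `[1, n]` is at most `√n`. -/
lemma aux_powers_card_le {k n : ℕ} (hk : 2 ≤ k) :
    ((Finset.Icc 1 n).filter (fun j => ∃ i, i ^ k = j)).card ≤ Nat.sqrt n := by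
  classical
  have hsub : (Finset.Icc 1 n).filter (fun j => ∃ i, i ^ k = j) ⊆
      (Finset.Icc 1 (Nat.sqrt n)).image (fun i => i ^ k) := by
    intro j hj
    simp only [Finset.mem_filter, Finset.mem_Icc] at hj
    obtain ⟨⟨hj1, hjn⟩, i, hik⟩ := hj
    have hi1 : 1 ≤ i := by
      rcases Nat.eq_zero_or_pos i with rfl | h
      · have h0 : (0:ℕ) ^ k = 0 := Nat.zero_pow (by omega)
        omega
      · exact h
    have hisq : i * i ≤ n := by
      calc i * i = i ^ 2 := (sq i).symm
        _ ≤ i ^ k := Nat.pow_le_pow_right hi1 hk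
        _ = j := hik
        _ ≤ n := hjn
    exact Finset.mem_image.mpr ⟨i, Finset.mem_Icc.mpr ⟨hi1, Nat.le_sqrt.mpr hisq⟩, hik⟩
  calc ((Finset.Icc 1 n).filter (fun j => ∃ i, i ^ k = j)).card
      ≤ ((Finset.Icc 1 (Nat.sqrt n)).image (fun i => i ^ k)).card :=
        Finset.card_le_card hsub
    _ ≤ (Finset.Icc 1 (Nat.sqrt n)).card := Finset.card_image_le
    _ = Nat.sqrt n := by rw [Nat.card_Icc]; omega

open scoped Classical in
theorem powers_eventually_fewer_than_primes (k : ℕ) (hk : 2 ≤ k) :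
    ∃ m, ∀ n > m,
      ((Finset.Icc 1 n).filter (fun j => ∃ i, i ^ k = j)).card <
        Nat.primeCounting n := by
  refine ⟨2 ^ 15, fun n hn => ?_⟩
  have hq : 2 ^ 14 ≤ n / 2 := by omega
  have hle : 2 * (n / 2) ≤ n := Nat.mul_div_le n 2
  have h1 : Nat.sqrt (2 * (n / 2)) + 2 ≤ Nat.primeCounting (2 * (n / 2)) :=
    aux_sqrt_add_two_le_primeCounting hq
  have h2 : Nat.primeCounting (2 * (n / 2)) ≤ Nat.primeCounting n :=
    Nat.monotone_primeCounting hle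
  have h3 : Nat.sqrt n ≤ Nat.sqrt (2 * (n / 2)) + 1 := by
    have hn' : n ≤ 2 * (n / 2) + 1 := by omega
    calc Nat.sqrt n ≤ Nat.sqrt (2 * (n / 2) + 1) := Nat.sqrt_le_sqrt hn'
      _ ≤ Nat.sqrt (2 * (n / 2)) + 1 := Nat.sqrt_succ_le_succ_sqrt _
  calc ((Finset.Icc 1 n).filter (fun j => ∃ i, i ^ k = j)).card
      ≤ Nat.sqrt n := aux_powers_card_le hk
    _ < Nat.sqrt n + 1 := Nat.lt_succ_self _
    _ ≤ Nat.sqrt (2 * (n / 2)) + 2 := by omega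
    _ ≤ Nat.primeCounting (2 * (n / 2)) := h1
    _ ≤ Nat.primeCounting n := h2
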